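/- Let $x_0,\ldots,x_t$ and $\beta$ be integers, and define $x_\nu := \beta + \min_{j_1+j_2=\nu-1,\ j_1,j_2\ge 0}(x_{j_1}+x_{j_2})$ for all $\nu \ge t+1$. Then the sequence of first differences $(x_{\nu+1}-x_\nu)_{\nu\ge 0}$ is eventually periodic with period length $p+1$, where $p\in\arg\min_{0\le j\le t}(x_j+\beta)/(j+1)$. -/

import Mathlib

theorem stmt2 (t : ℕ) (β : ℤ) (x : ℕ → ℤ)
    (hrec : ∀ ν : ℕ, ∀ _hν : t + 1 ≤ ν,
      x ν = β + (Finset.range ν).inf' (Finset.nonempty_range_iff.mpr (by omega))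
        (fun j => x j + x (ν - 1 - j)))
    (p : ℕ) (hp : p ≤ t)
    (hmin : ∀ j : ℕ, j ≤ t → ((x p : ℚ) + β) / (p + 1) ≤ ((x j : ℚ) + β) / (j + 1)) :
    ∃ N : ℕ, ∀ ν : ℕ, N ≤ ν →
      x (ν + 1 + (p + 1)) - x (ν + (p + 1)) = x (ν + 1) - x ν := by
  set D : ℕ → ℤ := fun ν => ((p : ℤ) + 1) * (x ν + β) - ((ν : ℤ) + 1) * (x p + β) with hD
  -- D is nonnegative
  have hDnn : ∀ ν, 0 ≤ D ν := by
    intro ν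
    induction ν using Nat.strong_induction_on with
    | _ ν ih =>
      by_cases hν : ν ≤ t
      · have h := hmin ν hν
        rw [div_le_div_iff₀ (by positivity) (by positivity)] at h
        have h' : ((x p : ℚ) + β) * (ν + 1) ≤ ((x ν : ℚ) + β) * (p + 1) := h
        have h'' : ((x p + β) * ((ν : ℤ) + 1)) ≤ ((x ν + β) * ((p : ℤ) + 1)) := by
          exact_mod_cast h'
        simp only [hD]
        linarith
      · push_neg at hν
        have hrecν := hrec ν (by omega)
        obtain ⟨j, hj, hxj⟩ := Finset.exists_mem_eq_inf'
          (Finset.nonempty_range_iff.mpr (show ν ≠ 0 by omega))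
          (fun j => x j + x (ν - 1 - j))
        rw [hxj] at hrecν
        have hjν : j < ν := Finset.mem_range.mp hj
        have hkν : ν - 1 - j < ν := by omega
        have h1 := ih j hjν
        have h2 := ih (ν - 1 - j) hkν
        have hsum : ((ν : ℤ) + 1) = ((j : ℤ) + 1) + (((ν - 1 - j : ℕ) : ℤ) + 1) := by
          have : (j + 1) + ((ν - 1 - j) + 1) = ν + 1 := by omega
          exact_mod_cast this.symm
        have hkey : D ν = D j + D (ν - 1 - j) := by
          simp only [hD]
          rw [hrecν, hsum]
          ring
        rw [hkey]
        linarith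
  -- one-step decrease
  have hstep : ∀ ν, t ≤ ν → D (ν + (p + 1)) ≤ D ν := by
    intro ν hν
    have hrecν := hrec (ν + (p + 1)) (by omega)
    have hmem : p ∈ Finset.range (ν + (p + 1)) := Finset.mem_range.mpr (by omega)
    have hle0 := Finset.inf'_le (fun j => x j + x ((ν + (p + 1)) - 1 - j)) hmem
    have harg : (ν + (p + 1)) - 1 - p = ν := by omega
    rw [harg] at hle0
    have hle : x (ν + (p + 1)) ≤ β + (x p + x ν) := by
      rw [hrecν]; exact add_le_add_right hle0 β
    have hmul : ((p : ℤ) + 1) * (x (ν + (p + 1))) ≤ ((p : ℤ) + 1) * (β + (x p + x ν)) := by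
      have hpos : (0 : ℤ) ≤ (p : ℤ) + 1 := by positivity
      exact mul_le_mul_of_nonneg_left hle hpos
    have hcast : (((ν + (p + 1) : ℕ)) : ℤ) = (ν : ℤ) + (p : ℤ) + 1 := by push_cast; ring
    simp only [hD, hcast]
    nlinarith [hmul]
  -- sums over a block of residues
  set g : ℕ → ℤ := fun k => ∑ r ∈ Finset.range (p + 1), D (t + k * (p + 1) + r) with hg
  have hgstep : ∀ k, g (k + 1) ≤ g k := by
    intro k
    apply Finset.sum_le_sum
    intro r _
    have hidx : t + (k + 1) * (p + 1) + r = (t + k * (p + 1) + r) + (p + 1) := by ring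
    rw [hidx]
    exact hstep _ (by omega)
  have hganti : ∀ m n, m ≤ n → g n ≤ g m :=
    fun m n h => antitone_nat_of_succ_le hgstep h
  have hgnn : ∀ k, 0 ≤ g k := by
    intro k
    exact Finset.sum_nonneg fun r _ => hDnn _
  -- minimum of g via well-foundedness of ℕ
  obtain ⟨m, hmem, hmmin⟩ := Nat.lt_wfRel.wf.has_min
    (Set.range fun k => (g k).toNat) ⟨(g 0).toNat, 0, rfl⟩
  obtain ⟨K, hK⟩ := hmem
  have hKmin : ∀ k, g K ≤ g k := by
    intro k
    have h1 : m ≤ (g k).toNat := Nat.not_lt.mp (hmmin ((g k).toNat) ⟨k, rfl⟩)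
    have h2 := hgnn k
    have h3 := hgnn K
    have h4 : (g K).toNat = m := hK
    omega
  have hgconst : ∀ k, K ≤ k → g k = g K :=
    fun k hk => le_antisymm (hganti K k hk) (hKmin k)
  -- termwise equality for k ≥ K
  have hterm : ∀ k, K ≤ k → ∀ r, r < p + 1 →
      D ((t + k * (p + 1) + r) + (p + 1)) = D (t + k * (p + 1) + r) := by
    intro k hk r hr
    have hle : ∀ i ∈ Finset.range (p + 1),
        D ((t + k * (p + 1) + i) + (p + 1)) ≤ D (t + k * (p + 1) + i) :=
      fun i _ => hstep _ (by omega)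
    have hsumeq : ∑ i ∈ Finset.range (p + 1), D ((t + k * (p + 1) + i) + (p + 1))
        = ∑ i ∈ Finset.range (p + 1), D (t + k * (p + 1) + i) := by
      have e1 : g (k + 1) = g k := by
        rw [hgconst (k + 1) (by omega), hgconst k hk]
      have e2 : ∀ i, t + (k + 1) * (p + 1) + i = (t + k * (p + 1) + i) + (p + 1) := by
        intro i; ring
      simp only [hg] at e1
      calc ∑ i ∈ Finset.range (p + 1), D ((t + k * (p + 1) + i) + (p + 1))
          = ∑ i ∈ Finset.range (p + 1), D (t + (k + 1) * (p + 1) + i) := by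
            apply Finset.sum_congr rfl; intro i _; rw [e2]
        _ = ∑ i ∈ Finset.range (p + 1), D (t + k * (p + 1) + i) := e1
    have := (Finset.sum_eq_sum_iff_of_le hle).mp hsumeq
    exact this r (Finset.mem_range.mpr hr)
  -- D is eventually (p+1)-periodic
  have hDper : ∀ ν, t + K * (p + 1) ≤ ν → D (ν + (p + 1)) = D ν := by
    intro ν hν
    set k := (ν - t) / (p + 1) with hk
    set r := (ν - t) % (p + 1) with hr
    have hdm := Nat.div_add_mod (ν - t) (p + 1)
    have hrlt : r < p + 1 := Nat.mod_lt _ (by omega)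
    have hkK : K ≤ k := by
      rw [hk]
      rw [Nat.le_div_iff_mul_le (by omega)]
      omega
    have hνeq : ν = t + k * (p + 1) + r := by
      have h5 : (p + 1) * k + r = ν - t := by rw [hk, hr]; exact hdm
      rw [Nat.mul_comm] at h5
      omega
    rw [hνeq]
    exact hterm k hkK r hrlt
  -- translate to x
  have xkey : ∀ ν, t + K * (p + 1) ≤ ν → x (ν + (p + 1)) = x ν + x p + β := by
    intro ν hν
    have h := hDper ν hν
    simp only [hD] at h
    have hcast : (((ν + (p + 1) : ℕ)) : ℤ) = (ν : ℤ) + (p : ℤ) + 1 := by push_cast; ring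
    rw [hcast] at h
    have h0 : ((p : ℤ) + 1) * (x (ν + (p + 1)) - x ν - x p - β) = 0 := by
      linear_combination h
    have hne : ((p : ℤ) + 1) ≠ 0 := by positivity
    have := mul_eq_zero.mp h0
    rcases this with h' | h'
    · exact absurd h' hne
    · linarith
  refine ⟨t + K * (p + 1), fun ν hν => ?_⟩
  have h1 := xkey ν hν
  have h2 := xkey (ν + 1) (by omega)
  have e : ν + 1 + (p + 1) = (ν + 1) + (p + 1) := rfl
  rw [e, h2, h1]
  ring
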